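/- Let f : 𝕋 → ℂ be measurable with ‖f‖_∞ < ∞ and ‖f‖_1 > 0, and suppose an operator T satisfies, for some constant K and all p ∈ (1,2], the weak-type bound ‖Tf‖_{L^{p,∞}} ≤ K·log(e + p')·‖f‖_p where p' = p/(p−1). Then ‖Tf‖_{L^{1,∞}} ≤ C·K·‖f‖_1·log(e^e + ‖f‖_∞/‖f‖_1) for an absolute constant C. -/

import Mathlib

open MeasureTheory
open scoped ENNReal NNReal

/-- If an operator `T` satisfies the weak-type `(p,p)` bounds
`‖Tf‖_{p,∞} ≤ K·log(e + p')·‖f‖_p` for all `1 < p ≤ 2` (on a probability space),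
then for `f` with `0 < ‖f‖₁` and `‖f‖_∞ < ∞`,
`‖Tf‖_{1,∞} ≤ C·K·‖f‖₁·log(e^e + ‖f‖_∞/‖f‖₁)` for an absolute constant `C`. -/
theorem weak_one_infty_from_weak_p :
    ∃ C : ℝ, 0 < C ∧
      ∀ (α : Type) (_ : MeasurableSpace α) (μ : Measure α), IsProbabilityMeasure μ →
        ∀ (T : (α → ℂ) → α → ℂ) (K : ℝ) (f : α → ℂ), Measurable f →
          eLpNorm f ⊤ μ < ⊤ → eLpNorm f 1 μ ≠ 0 →
          (∀ p : ℝ, 1 < p → p ≤ 2 → ∀ lam : ℝ, 0 < lam →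
            lam * (μ {x | lam < ‖T f x‖}).toReal ^ (1 / p) ≤
              K * Real.log (Real.exp 1 + p / (p - 1)) *
                (eLpNorm f (ENNReal.ofReal p) μ).toReal) →
          ∀ lam : ℝ, 0 < lam →
            lam * (μ {x | lam < ‖T f x‖}).toReal ≤
              C * K * (eLpNorm f 1 μ).toReal *
                Real.log (Real.exp (Real.exp 1) +
                  (eLpNorm f ⊤ μ).toReal / (eLpNorm f 1 μ).toReal) := by
  refine ⟨Real.exp 1, Real.exp_pos 1, ?_⟩
  intro α _ μ hμ T K f hf hftop hf1 hT lam hlam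
  have hfm : AEStronglyMeasurable f μ := hf.aestronglyMeasurable
  set M := eLpNorm f ⊤ μ with hM
  set L1 := eLpNorm f 1 μ with hL1
  have h1M : L1 ≤ M := eLpNorm_le_eLpNorm_of_exponent_le le_top hfm
  have hL1top : L1 < ⊤ := lt_of_le_of_lt h1M hftop
  set N1 : ℝ := L1.toReal with hN1def
  set Ninf : ℝ := M.toReal with hNinfdef
  have hN1 : 0 < N1 := ENNReal.toReal_pos hf1 hL1top.ne
  have hNle : N1 ≤ Ninf := ENNReal.toReal_mono hftop.ne h1M
  have hNinf : 0 < Ninf := lt_of_lt_of_le hN1 hNle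
  set R : ℝ := Ninf / N1 with hRdef
  have hR1 : 1 ≤ R := (one_le_div hN1).mpr hNle
  have hRpos : 0 < R := lt_of_lt_of_le one_pos hR1
  -- the target logarithm is at least 1
  have hlogbig : 1 ≤ Real.log (Real.exp (Real.exp 1) + R) := by
    have h1 : Real.exp 1 ≤ Real.exp (Real.exp 1) :=
      Real.exp_le_exp.mpr (by nlinarith [Real.add_one_le_exp (1 : ℝ)])
    have h2 := Real.log_le_log (Real.exp_pos 1)
      (show Real.exp 1 ≤ Real.exp (Real.exp 1) + R by linarith)
    rwa [Real.log_exp] at h2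
  -- K is nonnegative
  have hK : 0 ≤ K := by
    have h2 := hT 2 (by norm_num) le_rfl 1 one_pos
    have hL2le : eLpNorm f (ENNReal.ofReal 2) μ ≤ M := by
      exact eLpNorm_le_eLpNorm_of_exponent_le le_top hfm
    have hL2ge : L1 ≤ eLpNorm f (ENNReal.ofReal 2) μ := by
      apply eLpNorm_le_eLpNorm_of_exponent_le _ hfm
      rw [show ENNReal.ofReal 2 = 2 by norm_num]
      exact one_le_two
    have hL2pos : 0 < (eLpNorm f (ENNReal.ofReal 2) μ).toReal :=
      ENNReal.toReal_pos (fun h => hf1 (le_antisymm (h ▸ hL2ge) zero_le))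
        (lt_of_le_of_lt hL2le hftop).ne
    have hlogpos : 0 < Real.log (Real.exp 1 + 2 / (2 - 1)) := by
      apply Real.log_pos
      nlinarith [Real.add_one_le_exp (1 : ℝ)]
    nlinarith [ENNReal.toReal_nonneg (a := μ {x | 1 < ‖T f x‖}),
      Real.rpow_nonneg (ENNReal.toReal_nonneg (a := μ {x | 1 < ‖T f x‖})) (1 / 2),
      mul_pos hlogpos hL2pos]
  set m : ℝ := (μ {x | lam < ‖T f x‖}).toReal with hmdef
  have hm0 : 0 ≤ m := ENNReal.toReal_nonneg
  rcases eq_or_lt_of_le hm0 with hmz | hmpos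
  · rw [← hmz, mul_zero]
    have h0 : 0 ≤ Real.exp 1 * K * N1 * Real.log (Real.exp (Real.exp 1) + R) :=
      mul_nonneg (mul_nonneg (mul_nonneg (Real.exp_pos 1).le hK) hN1.le) (by linarith)
    linarith
  have hm1 : m ≤ 1 := by
    have : μ {x | lam < ‖T f x‖} ≤ μ Set.univ := measure_mono (Set.subset_univ _)
    rw [measure_univ] at this
    simpa [hmdef] using ENNReal.toReal_mono (by simp) this
  -- choice of exponents
  set p' : ℝ := max 2 (Real.log R) with hp'def
  have hp'2 : 2 ≤ p' := le_max_left _ _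
  have hp'pos : 0 < p' - 1 := by linarith
  set p : ℝ := p' / (p' - 1) with hpdef
  have hp1 : 1 < p := (one_lt_div hp'pos).mpr (by linarith)
  have hp2 : p ≤ 2 := (div_le_iff₀ hp'pos).mpr (by linarith)
  have hppos : 0 < p := by linarith
  have hconj : p / (p - 1) = p' := by
    rw [hpdef]
    field_simp
    ring
  -- interpolation bound : ‖f‖_p ≤ N1 * e
  have hNp : (eLpNorm f (ENNReal.ofReal p) μ).toReal ≤ N1 * Real.exp 1 := by
    have hq0 : ENNReal.ofReal p ≠ 0 := by
      simp [ENNReal.ofReal_eq_zero, not_le, hppos]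
    have hqt : ENNReal.ofReal p ≠ ⊤ := ENNReal.ofReal_ne_top
    have hqr : (ENNReal.ofReal p).toReal = p := ENNReal.toReal_ofReal hppos.le
    have hbd : ∀ᵐ x ∂μ, (‖f x‖₊ : ℝ≥0∞) ≤ M := by
      rw [hM, eLpNorm_exponent_top]
      exact ae_le_eLpNormEssSup
    have hint : ∫⁻ x, (‖f x‖₊ : ℝ≥0∞) ^ p ∂μ ≤ M ^ (p - 1) * L1 := by
      rw [hL1, eLpNorm_one_eq_lintegral_enorm,
        ← lintegral_const_mul' _ _ (ENNReal.rpow_ne_top_of_nonneg (by linarith) hftop.ne)]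
      refine lintegral_mono_ae (hbd.mono fun x hx => ?_)
      calc (‖f x‖₊ : ℝ≥0∞) ^ p = (‖f x‖₊ : ℝ≥0∞) ^ (p - 1) * (‖f x‖₊ : ℝ≥0∞) ^ (1 : ℝ) := by
            rw [← ENNReal.rpow_add_of_nonneg _ _ (by linarith) zero_le_one]
            norm_num
        _ ≤ M ^ (p - 1) * (‖f x‖₊ : ℝ≥0∞) := by
            rw [ENNReal.rpow_one]
            exact mul_le_mul_left (ENNReal.rpow_le_rpow hx (by linarith)) _
    have hstep1 : eLpNorm f (ENNReal.ofReal p) μ ≤ (M ^ (p - 1) * L1) ^ (1 / p) := by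
      rw [eLpNorm_eq_lintegral_rpow_enorm_toReal hq0 hqt, hqr]
      exact ENNReal.rpow_le_rpow hint (by positivity)
    have hfin : (M ^ (p - 1) * L1) ^ (1 / p) ≠ ⊤ := by
      apply ENNReal.rpow_ne_top_of_nonneg (by positivity)
      exact ENNReal.mul_ne_top (ENNReal.rpow_ne_top_of_nonneg (by linarith) hftop.ne) hL1top.ne
    have hstep2 : (eLpNorm f (ENNReal.ofReal p) μ).toReal ≤ (Ninf ^ (p - 1) * N1) ^ (1 / p) := by
      have := ENNReal.toReal_mono hfin hstep1
      rwa [← ENNReal.toReal_rpow, ENNReal.toReal_mul, ← ENNReal.toReal_rpow] at this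
    refine hstep2.trans ?_
    -- real computation
    have hA : 0 < Ninf ^ (p - 1) * N1 := by positivity
    have hlogR : Real.log R ≤ p' := le_max_right _ _
    have hkey : (p - 1) * (Real.log Ninf - Real.log N1) ≤ p := by
      have hlR : Real.log R = Real.log Ninf - Real.log N1 := Real.log_div hNinf.ne' hN1.ne'
      have h1 : Real.log R * (p - 1) ≤ p := by
        rw [← hconj] at hlogR
        exact (le_div_iff₀ (by linarith)).mp hlogR
      nlinarith
    rw [Real.rpow_def_of_pos hA, Real.log_mul (by positivity) hN1.ne',
      Real.log_rpow hNinf]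
    calc Real.exp (((p - 1) * Real.log Ninf + Real.log N1) * (1 / p))
        ≤ Real.exp (Real.log N1 + 1) := by
          apply Real.exp_le_exp.mpr
          rw [mul_one_div, div_le_iff₀ hppos]
          nlinarith
      _ = N1 * Real.exp 1 := by rw [Real.exp_add, Real.exp_log hN1]
  -- main chain
  have hmain := hT p hp1 hp2 lam hlam
  rw [hconj] at hmain
  have hstep0 : lam * m ≤ lam * m ^ (1 / p) := by
    apply mul_le_mul_of_nonneg_left _ hlam.le
    calc m = m ^ (1 : ℝ) := (Real.rpow_one m).symm
      _ ≤ m ^ (1 / p) := Real.rpow_le_rpow_of_exponent_ge hmpos hm1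
        (by rw [div_le_one hppos]; linarith)
  have hlogle : Real.log (Real.exp 1 + p') ≤ Real.log (Real.exp (Real.exp 1) + R) := by
    apply Real.log_le_log (by positivity)
    have he : Real.exp 1 + 2 ≤ Real.exp (Real.exp 1) := by
      have h1 : (2.7182818283 : ℝ) < Real.exp 1 := Real.exp_one_gt_d9
      have h2 : Real.exp 2 ≤ Real.exp (Real.exp 1) := Real.exp_le_exp.mpr (by linarith)
      have h3 : Real.exp 2 = Real.exp 1 * Real.exp 1 := by
        rw [← Real.exp_add]; norm_num
      nlinarith
    rcases max_cases 2 (Real.log R) with ⟨h, _⟩ | ⟨h, _⟩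
    · rw [hp'def, h]; linarith
    · rw [hp'def, h]
      have := Real.log_le_sub_one_of_pos hRpos
      linarith
  have hlognn : 0 ≤ Real.log (Real.exp 1 + p') := by
    apply Real.log_nonneg
    linarith [Real.exp_pos 1]
  calc lam * m ≤ lam * m ^ (1 / p) := hstep0
    _ ≤ K * Real.log (Real.exp 1 + p') * (eLpNorm f (ENNReal.ofReal p) μ).toReal := hmain
    _ ≤ K * Real.log (Real.exp (Real.exp 1) + R) * (N1 * Real.exp 1) := by
        apply mul_le_mul (mul_le_mul_of_nonneg_left hlogle hK) hNp ENNReal.toReal_nonneg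
        exact mul_nonneg hK (by linarith)
    _ = Real.exp 1 * K * N1 * Real.log (Real.exp (Real.exp 1) + R) := by ring
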